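/- The Schrödinger equation of motion on the Hilbert space is μ-related to the Heisenberg equation of motion: if H is a Hermitian n×n complex matrix, ħ > 0, ψ₀ ∈ ℂⁿ, and ψ(t) = exp(−(i/ħ) t H) ψ₀, then the curve of rank-one operators ρ(t) = ρ_{ψ(t)} is differentiable and satisfies the Heisenberg equation dρ/dt = −(i/ħ)(H ρ(t) − ρ(t) H). -/

import Mathlib

open NormedSpace

section aux
attribute [local instance] Matrix.linftyOpNormedAddCommGroup Matrix.linftyOpNormedRing
  Matrix.linftyOpNormedAlgebra

lemma exp_entry_hasDerivAt {n : ℕ} (B : Matrix (Fin n) (Fin n) ℂ) (t : ℝ) (i j : Fin n) :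
    HasDerivAt (fun u : ℝ => exp (u • B) i j) ((B * exp (t • B)) i j) t := by
  have h1 : HasDerivAt (fun u : ℝ => exp (u • B)) (B * exp (t • B)) t :=
    hasDerivAt_exp_smul_const' B t
  let l : Matrix (Fin n) (Fin n) ℂ →ₗ[ℝ] ℂ :=
    { toFun := fun M => M i j, map_add' := fun _ _ => rfl, map_smul' := fun _ _ => rfl }
  exact (LinearMap.toContinuousLinearMap l).hasFDerivAt.comp_hasDerivAt t h1

end aux

attribute [local instance] Matrix.normedAddCommGroup Matrix.normedSpace

/-- The Schrödinger evolution on the Hilbert space is μ-related to the Heisenberg equation: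
for a Hermitian matrix `H`, `ħ > 0`, and `ψ t = exp(-(i/ħ) t H) ψ₀`, the curve of rank-one
operators `ρ t = |ψ t⟩⟨ψ t|` satisfies `dρ/dt = -(i/ħ)(H ρ - ρ H)`. -/
theorem schrodinger_heisenberg_mu_related {n : ℕ} (Hm : Matrix (Fin n) (Fin n) ℂ)
    (hHm : Hm.IsHermitian) (hbar : ℝ) (hhbar : 0 < hbar) (ψ₀ : Fin n → ℂ)
    (ψ : ℝ → Fin n → ℂ)
    (hψ : ψ = fun (t : ℝ) => (exp (((-Complex.I * (t : ℂ)) / (hbar : ℂ)) • Hm)).mulVec ψ₀)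
    (ρ : ℝ → Matrix (Fin n) (Fin n) ℂ)
    (hρ : ρ = fun t => Matrix.of fun i j => ψ t i * (starRingEnd ℂ) (ψ t j)) :
    ∀ t : ℝ, HasDerivAt ρ (((-Complex.I) / (hbar : ℂ)) • (Hm * ρ t - ρ t * Hm)) t := by
  intro t
  set c : ℂ := (-Complex.I) / (hbar : ℂ) with hc
  set B : Matrix (Fin n) (Fin n) ℂ := c • Hm with hB
  have hsc : ∀ u : ℝ, ((-Complex.I * (u : ℂ)) / (hbar : ℂ)) • Hm = u • B := by
    intro u
    rw [hB, ← smul_assoc]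
    congr 1
    rw [Complex.real_smul, hc]
    ring
  have hψ' : ∀ u : ℝ, ψ u = (exp (u • B)).mulVec ψ₀ := by
    intro u; rw [hψ]; simp only [hsc u]
  -- derivative of ψ
  have hψd : ∀ i, HasDerivAt (fun u => ψ u i) ((B.mulVec (ψ t)) i) t := by
    intro i
    have he : ∀ u : ℝ, ψ u i = ∑ k, exp (u • B) i k * ψ₀ k := by
      intro u; rw [hψ' u]; rfl
    have hd : HasDerivAt (fun u : ℝ => ∑ k, exp (u • B) i k * ψ₀ k)
        (∑ k, (B * exp (t • B)) i k * ψ₀ k) t :=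
      HasDerivAt.fun_sum fun k _ => (exp_entry_hasDerivAt B t i k).mul_const (ψ₀ k)
    have hval : (∑ k, (B * exp (t • B)) i k * ψ₀ k) = (B.mulVec (ψ t)) i := by
      rw [hψ' t, Matrix.mulVec_mulVec]
      rfl
    rw [← hval]
    exact hd.congr_of_eventuallyEq (Filter.Eventually.of_forall fun u => (he u))
  have hherm : ∀ k l, star (Hm k l) = Hm l k := by
    intro k l
    rw [← Matrix.conjTranspose_apply, hHm]
  have hcbar : star c = -c := by
    rw [hc]
    simp only [star_div₀, star_neg, Complex.star_def, Complex.conj_I, Complex.conj_ofReal]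
    ring
  rw [hρ]
  refine hasDerivAt_pi.2 ?_
  intro i
  rw [hasDerivAt_pi]
  intro j
  have h := (hψd i).mul ((hψd j).star)
  convert h using 1
  case e'_4 => rfl
  case e'_8 => rfl
  simp only [hρ, Matrix.of_apply, Matrix.smul_apply, Matrix.sub_apply, smul_eq_mul,
    Matrix.mul_apply, Matrix.mulVec, dotProduct, hB, Matrix.smul_apply,
    star_sum, star_mul', hcbar, hherm, mul_sub, Finset.mul_sum, Finset.sum_mul]
  rw [← Finset.sum_sub_distrib, ← Finset.sum_add_distrib]
  apply Finset.sum_congr rfl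
  intro k _
  simp only [starRingEnd_apply]
  ring
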